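/- Let B, K, N, F be positive integers and let U ∈ ℝ^{B×N}, P ∈ ℝ^{K×N}, G ∈ ℝ^{B×K}, R ∈ ℝ^{K×N} have all entries strictly positive. Define J̃(G, R) = Σ_{n=1}^N Σ_{k=1}^K ( P_{kn}/R_{kn} + F·log R_{kn} ) + Σ_{n=1}^N Σ_{b=1}^B ( F·log((GR)_{bn}) + U_{bn}/(2·(GR)_{bn}) ). Define the updated matrix R⁺ entrywise by R⁺_{kn} = R_{kn} · sqrt( [ (1/F)·P ⊙ R^{⊙(−2)} + Gᵀ((1/(2F))·U ⊙ (GR)^{⊙(−2)}) ]_{kn} / [ R^{⊙(−1)} + Gᵀ(GR)^{⊙(−1)} ]_{kn} ), where ⊙ denotes entrywise (Hadamard) operations and dotted exponents are entrywise powers. Then J̃(G, R⁺) ≤ J̃(G, R). -/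

import Mathlib

open Finset Matrix

lemma log_tangent {x y : ℝ} (hx : 0 < x) (hy : 0 < y) :
    Real.log y ≤ Real.log x + (y - x) / x := by
  have h := Real.log_le_sub_one_of_pos (div_pos hy hx)
  rw [Real.log_div hy.ne' hx.ne'] at h
  have hx' : x ≠ 0 := hx.ne'
  have : y / x - 1 = (y - x) / x := by field_simp
  rw [this] at h
  linarith

lemma amgm_min {A C x s : ℝ} (hA : 0 < A) (hC : 0 < C) (hx : 0 < x)
    (hs : s = Real.sqrt (A / C)) : A / s + C * s ≤ A / x + C * x := by
  have hs0 : 0 < s := hs ▸ Real.sqrt_pos.mpr (div_pos hA hC)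
  have hs2 : s ^ 2 = A / C := by rw [hs, Real.sq_sqrt (div_pos hA hC).le]
  have hAeq : A = C * s ^ 2 := by rw [hs2]; field_simp
  rw [div_add' _ _ _ hs0.ne', div_add' _ _ _ hx.ne', div_le_div_iff₀ hs0 hx]
  nlinarith [mul_nonneg hs0.le (sq_nonneg (x - s)), hC.le, sq_nonneg (x - s)]

lemma cs_ineq {ι : Type*} [Fintype ι] (g r rp : ι → ℝ)
    (hg : ∀ i, 0 < g i) (hr : ∀ i, 0 < r i) (hrp : ∀ i, 0 < rp i) :
    (∑ i, g i * r i) ^ 2 ≤ (∑ i, g i * rp i) * (∑ i, g i * (r i) ^ 2 / rp i) := by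
  apply Finset.sum_sq_le_sum_mul_sum_of_sq_eq_mul
  · intro i _; exact (mul_pos (hg i) (hrp i)).le
  · intro i _; exact (div_pos (mul_pos (hg i) (pow_pos (hr i) 2)) (hrp i)).le
  · intro i _
    have := (hrp i).ne'
    field_simp


/-- The block of the joint IVA–NMF cost function that depends on `G` and `R`:
`J̃(G,R) = Σₙ Σₖ (P_{kn}/R_{kn} + F·log R_{kn})
        + Σₙ Σ_b (F·log((GR)_{bn}) + U_{bn}/(2(GR)_{bn}))`. -/
noncomputable def Jtilde (B K N F : ℕ) (U : Matrix (Fin B) (Fin N) ℝ)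
    (P : Matrix (Fin K) (Fin N) ℝ) (G : Matrix (Fin B) (Fin K) ℝ)
    (R : Matrix (Fin K) (Fin N) ℝ) : ℝ :=
  (∑ n, ∑ k, (P k n / R k n + (F : ℝ) * Real.log (R k n))) +
  (∑ n, ∑ b, ((F : ℝ) * Real.log ((G * R) b n) + U b n / (2 * (G * R) b n)))

/-- Multiplicative update of the variance matrix `R` decreases the cost `J̃`. -/
theorem variance_update_decreases_cost
    (B K N F : ℕ) (hB : 0 < B) (hK : 0 < K) (hN : 0 < N) (hF : 0 < F)
    (U : Matrix (Fin B) (Fin N) ℝ) (P : Matrix (Fin K) (Fin N) ℝ)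
    (G : Matrix (Fin B) (Fin K) ℝ) (R : Matrix (Fin K) (Fin N) ℝ)
    (hU : ∀ b n, 0 < U b n) (hP : ∀ k n, 0 < P k n)
    (hG : ∀ b k, 0 < G b k) (hR : ∀ k n, 0 < R k n)
    (Rplus : Matrix (Fin K) (Fin N) ℝ)
    (hRplus : ∀ k n, Rplus k n = R k n * Real.sqrt
      ((((1 / (F : ℝ)) * P k n * (R k n)⁻¹ ^ 2 +
          (Gᵀ * (Matrix.of fun (b : Fin B) (n : Fin N) =>
              (1 / (2 * (F : ℝ))) * U b n * ((G * R) b n)⁻¹ ^ 2) :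
            Matrix (Fin K) (Fin N) ℝ) k n)) /
       ((R k n)⁻¹ +
          (Gᵀ * (Matrix.of fun (b : Fin B) (n : Fin N) => ((G * R) b n)⁻¹) :
            Matrix (Fin K) (Fin N) ℝ) k n))) :
    Jtilde B K N F U P G Rplus ≤ Jtilde B K N F U P G R := by
  haveI : Nonempty (Fin K) := Fin.pos_iff_nonempty.mp hK
  haveI : Nonempty (Fin B) := Fin.pos_iff_nonempty.mp hB
  have hF0 : (0:ℝ) < (F:ℝ) := by exact_mod_cast hF
  have hGR : ∀ b n, 0 < (G * R) b n := by
    intro b n; rw [Matrix.mul_apply]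
    exact Finset.sum_pos (fun k _ => mul_pos (hG b k) (hR k n)) Finset.univ_nonempty
  -- the numerator and denominator constants of the per-entry surrogate
  set A : Fin K → Fin N → ℝ := fun k n =>
    P k n + ∑ b, U b n / 2 * G b k * (R k n) ^ 2 / ((G * R) b n) ^ 2 with hAdef
  set Cc : Fin K → Fin N → ℝ := fun k n =>
    (F:ℝ) / R k n + (F:ℝ) * ∑ b, G b k / ((G * R) b n) with hCdef
  have hA : ∀ k n, 0 < A k n := by
    intro k n; rw [hAdef]
    have : 0 < ∑ b, U b n / 2 * G b k * (R k n) ^ 2 / ((G * R) b n) ^ 2 :=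
      Finset.sum_pos (fun b _ => div_pos (mul_pos (mul_pos (div_pos (hU b n) two_pos)
        (hG b k)) (pow_pos (hR k n) 2)) (pow_pos (hGR b n) 2)) Finset.univ_nonempty
    have := hP k n; dsimp only; linarith
  have hC : ∀ k n, 0 < Cc k n := by
    intro k n; rw [hCdef]
    have h1 : 0 < ∑ b, G b k / ((G * R) b n) :=
      Finset.sum_pos (fun b _ => div_pos (hG b k) (hGR b n)) Finset.univ_nonempty
    have h2 : 0 < (F:ℝ) / R k n := div_pos hF0 (hR k n)
    dsimp only; nlinarith
  -- the update is exactly sqrt(A/Cc)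
  have hkey : ∀ k n, Rplus k n = Real.sqrt (A k n / Cc k n) := by
    intro k n
    have hr := hR k n
    have hr' : R k n ≠ 0 := hr.ne'
    have e1 : (Gᵀ * (Matrix.of fun (b : Fin B) (n : Fin N) =>
        (1 / (2 * (F : ℝ))) * U b n * ((G * R) b n)⁻¹ ^ 2) :
        Matrix (Fin K) (Fin N) ℝ) k n
        = ∑ b, G b k * ((1 / (2 * (F : ℝ))) * U b n * ((G * R) b n)⁻¹ ^ 2) := by
      rw [Matrix.mul_apply]; simp [Matrix.transpose_apply]
    have e2 : (Gᵀ * (Matrix.of fun (b : Fin B) (n : Fin N) => ((G * R) b n)⁻¹) :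
        Matrix (Fin K) (Fin N) ℝ) k n = ∑ b, G b k * ((G * R) b n)⁻¹ := by
      rw [Matrix.mul_apply]; simp [Matrix.transpose_apply]
    set a := ∑ b, G b k * ((1 / (2 * (F : ℝ))) * U b n * ((G * R) b n)⁻¹ ^ 2) with ha
    set c := ∑ b, G b k * ((G * R) b n)⁻¹ with hc
    have eA : A k n = P k n + (F:ℝ) * (R k n) ^ 2 * a := by
      rw [hAdef, ha]; dsimp only
      congr 1
      rw [Finset.mul_sum]
      refine Finset.sum_congr rfl fun b _ => ?_
      have := (hGR b n).ne'
      field_simp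
    have eC : Cc k n = (F:ℝ) * ((R k n)⁻¹ + c) := by
      rw [hCdef, hc]; dsimp only
      rw [mul_add, Finset.mul_sum, Finset.mul_sum, div_eq_mul_inv]
      congr 1 <;>
        first
          | rfl
          | exact Finset.sum_congr rfl fun b _ => by rw [div_eq_mul_inv]; ring
    have hc0 : 0 < c := by
      rw [hc]
      exact Finset.sum_pos (fun b _ => mul_pos (hG b k) (inv_pos.mpr (hGR b n)))
        Finset.univ_nonempty
    have hden : (0:ℝ) < (R k n)⁻¹ + c := add_pos (inv_pos.mpr hr) hc0
    have hden' : (R k n)⁻¹ + c ≠ 0 := hden.ne'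
    have hF' : (F:ℝ) ≠ 0 := hF0.ne'
    have h4 : A k n / Cc k n =
        (R k n) ^ 2 * (((1 / (F : ℝ)) * P k n * (R k n)⁻¹ ^ 2 + a) / ((R k n)⁻¹ + c)) := by
      rw [eA, eC]
      field_simp
    rw [hRplus k n, e1, e2, h4,
      Real.sqrt_mul (sq_nonneg (R k n)), Real.sqrt_sq hr.le]
  have hRp : ∀ k n, 0 < Rplus k n := fun k n => by
    rw [hkey k n]; exact Real.sqrt_pos.mpr (div_pos (hA k n) (hC k n))
  have hGRp : ∀ b n, 0 < (G * Rplus) b n := by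
    intro b n; rw [Matrix.mul_apply]
    exact Finset.sum_pos (fun k _ => mul_pos (hG b k) (hRp k n)) Finset.univ_nonempty
  -- reduce to a per-column statement
  simp only [Jtilde]
  rw [← Finset.sum_add_distrib, ← Finset.sum_add_distrib]
  apply Finset.sum_le_sum
  intro n _
  -- pointwise tangent inequality for the first log terms
  have hlog1 : ∀ k, (F:ℝ) * Real.log (Rplus k n) ≤
      (F:ℝ) * Real.log (R k n) + (F:ℝ) * Rplus k n / R k n - (F:ℝ) := by
    intro k
    have t := log_tangent (hR k n) (hRp k n)
    have ht : (Rplus k n - R k n) / R k n = Rplus k n / R k n - 1 := by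
      rw [sub_div, div_self (hR k n).ne']
    rw [ht] at t
    have h1 := mul_le_mul_of_nonneg_left t hF0.le
    have h2 : (F:ℝ) * (Real.log (R k n) + (Rplus k n / R k n - 1))
        = (F:ℝ) * Real.log (R k n) + (F:ℝ) * Rplus k n / R k n - (F:ℝ) := by ring
    linarith
  have hlog2 : ∀ b, (F:ℝ) * Real.log ((G * Rplus) b n) ≤
      (F:ℝ) * Real.log ((G * R) b n) + (F:ℝ) * ((G * Rplus) b n) / ((G * R) b n) - (F:ℝ) := by
    intro b
    have t := log_tangent (hGR b n) (hGRp b n)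
    have ht : ((G * Rplus) b n - (G * R) b n) / ((G * R) b n)
        = (G * Rplus) b n / ((G * R) b n) - 1 := by
      rw [sub_div, div_self (hGR b n).ne']
    rw [ht] at t
    have h1 := mul_le_mul_of_nonneg_left t hF0.le
    have h2 : (F:ℝ) * (Real.log ((G * R) b n) + ((G * Rplus) b n / ((G * R) b n) - 1))
        = (F:ℝ) * Real.log ((G * R) b n) + (F:ℝ) * ((G * Rplus) b n) / ((G * R) b n) - (F:ℝ) := by
      ring
    linarith
  -- Jensen / Cauchy-Schwarz inequality for the 1/(GR⁺) terms
  have hjen : ∀ b, U b n / (2 * (G * Rplus) b n) ≤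
      ∑ k, U b n / 2 * G b k * (R k n) ^ 2 / (((G * R) b n) ^ 2 * Rplus k n) := by
    intro b
    have hS := hGR b n
    have hT := hGRp b n
    have hQ : 0 < ∑ k, G b k * (R k n) ^ 2 / Rplus k n :=
      Finset.sum_pos (fun k _ => div_pos (mul_pos (hG b k) (pow_pos (hR k n) 2)) (hRp k n))
        Finset.univ_nonempty
    have hCS : ((G * R) b n) ^ 2 ≤ (G * Rplus) b n * ∑ k, G b k * (R k n) ^ 2 / Rplus k n := by
      rw [Matrix.mul_apply, Matrix.mul_apply]
      exact cs_ineq (fun k => G b k) (fun k => R k n) (fun k => Rplus k n)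
        (fun k => hG b k) (fun k => hR k n) (fun k => hRp k n)
    have e : ∑ k, U b n / 2 * G b k * (R k n) ^ 2 / (((G * R) b n) ^ 2 * Rplus k n)
        = U b n / 2 * (∑ k, G b k * (R k n) ^ 2 / Rplus k n) / ((G * R) b n) ^ 2 := by
      rw [Finset.mul_sum, Finset.sum_div]
      exact Finset.sum_congr rfl fun k _ => by ring
    rw [e, div_le_div_iff₀ (by positivity) (by positivity)]
    nlinarith [mul_le_mul_of_nonneg_left hCS (hU b n).le, hT, hQ, (hU b n).le]
  -- expansion of A/R⁺
  have E1 : ∑ k, A k n / Rplus k n = (∑ k, P k n / Rplus k n) +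
      ∑ b, ∑ k, U b n / 2 * G b k * (R k n) ^ 2 / (((G * R) b n) ^ 2 * Rplus k n) := by
    have eA : ∀ k, A k n / Rplus k n = P k n / Rplus k n +
        ∑ b, U b n / 2 * G b k * (R k n) ^ 2 / (((G * R) b n) ^ 2 * Rplus k n) := by
      intro k
      rw [hAdef]; dsimp only
      rw [add_div, Finset.sum_div]
      congr 1
      exact Finset.sum_congr rfl fun b _ => by ring
    rw [Finset.sum_congr rfl fun k _ => eA k, Finset.sum_add_distrib, Finset.sum_comm]
  -- expansion of Cc·R⁺
  have E2 : ∑ k, Cc k n * Rplus k n = (∑ k, (F:ℝ) * Rplus k n / R k n) +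
      ∑ b, (F:ℝ) * ((G * Rplus) b n) / ((G * R) b n) := by
    have eC : ∀ k, Cc k n * Rplus k n = (F:ℝ) * Rplus k n / R k n +
        ∑ b, (F:ℝ) * G b k * Rplus k n / ((G * R) b n) := by
      intro k
      rw [hCdef]; dsimp only
      rw [add_mul]
      congr 1
      · ring
      · rw [Finset.mul_sum, Finset.sum_mul]
        exact Finset.sum_congr rfl fun b _ => by ring
    have eT : ∀ b, (F:ℝ) * ((G * Rplus) b n) / ((G * R) b n)
        = ∑ k, (F:ℝ) * G b k * Rplus k n / ((G * R) b n) := by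
      intro b
      rw [Matrix.mul_apply, Finset.mul_sum, Finset.sum_div]
      exact Finset.sum_congr rfl fun k _ => by ring
    rw [Finset.sum_congr rfl fun k _ => eC k, Finset.sum_add_distrib, Finset.sum_comm]
    congr 1
    exact Finset.sum_congr rfl fun b _ => (eT b).symm
  -- expansion of A/R (equality case)
  have E1' : ∑ k, A k n / R k n = (∑ k, P k n / R k n) +
      ∑ b, U b n / (2 * (G * R) b n) := by
    have eA : ∀ k, A k n / R k n = P k n / R k n +
        ∑ b, U b n / 2 * G b k * (R k n) ^ 2 / (((G * R) b n) ^ 2 * R k n) := by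
      intro k
      rw [hAdef]; dsimp only
      rw [add_div, Finset.sum_div]
      congr 1
      exact Finset.sum_congr rfl fun b _ => by ring
    rw [Finset.sum_congr rfl fun k _ => eA k, Finset.sum_add_distrib, Finset.sum_comm]
    congr 1
    refine Finset.sum_congr rfl fun b _ => ?_
    have hS := hGR b n
    have key : ∀ k, U b n / 2 * G b k * (R k n) ^ 2 / (((G * R) b n) ^ 2 * R k n)
        = U b n / (2 * ((G * R) b n) ^ 2) * (G b k * R k n) := by
      intro k
      have := (hR k n).ne'
      field_simp
    rw [Finset.sum_congr rfl fun k _ => key k, ← Finset.mul_sum, ← Matrix.mul_apply]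
    field_simp
  -- expansion of Cc·R (equality case)
  have E2' : ∑ k, Cc k n * R k n = (K:ℝ) * F + (B:ℝ) * F := by
    have eC : ∀ k, Cc k n * R k n = (F:ℝ) +
        ∑ b, (F:ℝ) * G b k * R k n / ((G * R) b n) := by
      intro k
      rw [hCdef]; dsimp only
      rw [add_mul]
      congr 1
      · exact div_mul_cancel₀ _ (hR k n).ne'
      · rw [Finset.mul_sum, Finset.sum_mul]
        exact Finset.sum_congr rfl fun b _ => by ring
    rw [Finset.sum_congr rfl fun k _ => eC k, Finset.sum_add_distrib, Finset.sum_const,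
      Finset.card_univ, Fintype.card_fin, nsmul_eq_mul, Finset.sum_comm]
    congr 1
    have eT : ∀ b, ∑ k, (F:ℝ) * G b k * R k n / ((G * R) b n) = (F:ℝ) := by
      intro b
      have hS := hGR b n
      have : ∀ k, (F:ℝ) * G b k * R k n / ((G * R) b n)
          = (F:ℝ) / ((G * R) b n) * (G b k * R k n) := fun k => by ring
      rw [Finset.sum_congr rfl fun k _ => this k, ← Finset.mul_sum, ← Matrix.mul_apply]
      field_simp
    rw [Finset.sum_congr rfl fun b _ => eT b, Finset.sum_const, Finset.card_univ,
      Fintype.card_fin, nsmul_eq_mul]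
  -- the surrogate chain
  calc
    (∑ k, (P k n / Rplus k n + (F:ℝ) * Real.log (Rplus k n))) +
        ∑ b, ((F:ℝ) * Real.log ((G * Rplus) b n) + U b n / (2 * (G * Rplus) b n))
      ≤ (∑ k, (P k n / Rplus k n +
            ((F:ℝ) * Real.log (R k n) + (F:ℝ) * Rplus k n / R k n - (F:ℝ)))) +
        ∑ b, (((F:ℝ) * Real.log ((G * R) b n) +
              (F:ℝ) * ((G * Rplus) b n) / ((G * R) b n) - (F:ℝ)) +
            ∑ k, U b n / 2 * G b k * (R k n) ^ 2 / (((G * R) b n) ^ 2 * Rplus k n)) := by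
        refine add_le_add (Finset.sum_le_sum fun k _ => ?_)
          (Finset.sum_le_sum fun b _ => ?_)
        · exact add_le_add_right (hlog1 k) _
        · exact add_le_add (hlog2 b) (hjen b)
    _ = (∑ k, (A k n / Rplus k n + Cc k n * Rplus k n)) +
        ((∑ k, ((F:ℝ) * Real.log (R k n) - (F:ℝ))) +
          ∑ b, ((F:ℝ) * Real.log ((G * R) b n) - (F:ℝ))) := by
        simp only [Finset.sum_add_distrib, Finset.sum_sub_distrib]
        linarith [E1, E2]
    _ ≤ (∑ k, (A k n / R k n + Cc k n * R k n)) +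
        ((∑ k, ((F:ℝ) * Real.log (R k n) - (F:ℝ))) +
          ∑ b, ((F:ℝ) * Real.log ((G * R) b n) - (F:ℝ))) := by
        refine add_le_add_left (Finset.sum_le_sum fun k _ => ?_) _
        exact amgm_min (hA k n) (hC k n) (hR k n) (hkey k n)
    _ = (∑ k, (P k n / R k n + (F:ℝ) * Real.log (R k n))) +
        ∑ b, ((F:ℝ) * Real.log ((G * R) b n) + U b n / (2 * (G * R) b n)) := by
        simp only [Finset.sum_add_distrib, Finset.sum_sub_distrib, Finset.sum_const,
          Finset.card_univ, Fintype.card_fin, nsmul_eq_mul]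
        linarith [E1', E2']
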